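/- Let p ≥ 5 be a prime, n a positive integer, and suppose w_1,…,w_n ∈ Z_p have ν_p(w_j) = 1 for all j, are pairwise distinct, and satisfy max_{1≤j≤n} ν_p( Π_{ℓ≠j} (w_j − w_ℓ) ) = n − 1 + f(n) where f(n) = Σ_{i=1}^∞ ⌊(n−1)/((p−1)p^{i−1})⌋. Then every entry of the inverse of the Vandermonde matrix V (with (i,j)-entry w_i^{j−1}) at position (i,j) has p-adic valuation at least 1 − i − (n−1)·p/(p−1)². -/

import Mathlib

open Polynomial Finset in
/-- The inverse of the Vandermonde matrix is the matrix of coefficients of Lagrange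
basis polynomials. -/
theorem vandermonde_inv_eq {K : Type*} [Field K] {n : ℕ} (W : Fin n → K)
    (hW : Function.Injective W) :
    (Matrix.vandermonde W)⁻¹ = Matrix.of (fun i j =>
      (∏ l ∈ Finset.univ.erase j, (X - C (W l))).coeff i /
        ∏ l ∈ Finset.univ.erase j, (W j - W l)) := by
  have hD : ∀ j : Fin n, (∏ l ∈ Finset.univ.erase j, (W j - W l)) ≠ 0 := by
    intro j
    refine Finset.prod_ne_zero_iff.2 fun l hl => sub_ne_zero.2 fun h => ?_
    exact (Finset.mem_erase.1 hl).1 (hW h.symm)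
  refine Matrix.inv_eq_right_inv ?_
  ext k j
  have hdeg : (∏ l ∈ Finset.univ.erase j, (X - C (W l))).natDegree < n := by
    have h1 : (∏ l ∈ Finset.univ.erase j, (X - C (W l))).natDegree = (Finset.univ.erase j).card := by
      rw [Polynomial.natDegree_prod_of_monic _ _ fun l _ => Polynomial.monic_X_sub_C _]
      simp [Polynomial.natDegree_X_sub_C]
    rw [h1, Finset.card_erase_of_mem (Finset.mem_univ j), Finset.card_univ, Fintype.card_fin]
    have := j.pos; omega
  have heval : ∀ x : K, (∏ l ∈ Finset.univ.erase j, (X - C (W l))).eval x =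
      ∏ l ∈ Finset.univ.erase j, (x - W l) := by
    intro x; simp [Polynomial.eval_prod]
  have key : (Matrix.vandermonde W * Matrix.of (fun (i j : Fin n) =>
      (∏ l ∈ Finset.univ.erase j, (X - C (W l))).coeff i /
        ∏ l ∈ Finset.univ.erase j, (W j - W l))) k j =
      (∏ l ∈ Finset.univ.erase j, (W k - W l)) / ∏ l ∈ Finset.univ.erase j, (W j - W l) := by
    rw [Matrix.mul_apply]
    simp only [Matrix.vandermonde, Matrix.of_apply]
    calc ∑ i : Fin n, W k ^ (i : ℕ) * ((∏ l ∈ Finset.univ.erase j, (X - C (W l))).coeff i /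
            ∏ l ∈ Finset.univ.erase j, (W j - W l))
        = (∑ i : Fin n, (∏ l ∈ Finset.univ.erase j, (X - C (W l))).coeff i * W k ^ (i : ℕ)) /
            ∏ l ∈ Finset.univ.erase j, (W j - W l) := by
          rw [Finset.sum_div]; exact Finset.sum_congr rfl fun i _ => by ring
      _ = (∏ l ∈ Finset.univ.erase j, (X - C (W l))).eval (W k) /
            ∏ l ∈ Finset.univ.erase j, (W j - W l) := by
          congr 1
          exact (Fin.sum_univ_eq_sum_range (fun m => (∏ l ∈ Finset.univ.erase j, (X - C (W l))).coeff m * W k ^ m) n).trans (Polynomial.eval_eq_sum_range' hdeg _).symm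
      _ = (∏ l ∈ Finset.univ.erase j, (W k - W l)) /
            ∏ l ∈ Finset.univ.erase j, (W j - W l) := by rw [heval]
  rw [key]
  by_cases hkj : k = j
  · subst hkj; rw [div_self (hD k), Matrix.one_apply_eq]
  · rw [Matrix.one_apply_ne hkj, Finset.prod_eq_zero (Finset.mem_erase.2 ⟨hkj, Finset.mem_univ k⟩)
      (by simp), zero_div]

open Polynomial Finset in
lemma coeff_prod_X_sub_C_norm_le (p : ℕ) [Fact p.Prime] {n : ℕ} (W : Fin n → ℚ_[p])
    (hval : ∀ l, ‖W l‖ ≤ (p : ℝ)⁻¹) (j : Fin n) (i : ℕ) (hi : i ≤ n - 1) :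
    ‖(∏ l ∈ Finset.univ.erase j, (X - C (W l))).coeff i‖ ≤ ((p : ℝ)⁻¹) ^ (n - 1 - i) := by
  have hpinv : (0 : ℝ) ≤ (p : ℝ)⁻¹ := by positivity
  have hcard : Multiset.card ((Finset.univ.erase j).val.map W) = n - 1 := by
    simp [Finset.card_erase_of_mem]
  have hprod : ∏ l ∈ Finset.univ.erase j, (X - C (W l)) =
      (((Finset.univ.erase j).val.map W).map (fun t => X - C t)).prod := by
    rw [Multiset.map_map]; rfl
  rw [hprod, Multiset.prod_X_sub_C_coeff _ (by rw [hcard]; exact hi), hcard,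
    norm_mul, norm_pow, norm_neg, norm_one, one_pow, one_mul,
    Finset.esymm_map_val]
  refine IsUltrametricDist.norm_sum_le_of_forall_le_of_nonneg (by positivity) ?_
  intro t ht
  have htc : t.card = n - 1 - i := (Finset.mem_powersetCard.1 ht).2
  rw [norm_prod]
  calc ∏ l ∈ t, ‖W l‖ ≤ ∏ l ∈ t, (p : ℝ)⁻¹ :=
        Finset.prod_le_prod (fun l _ => norm_nonneg _) (fun l _ => hval l)
    _ = ((p : ℝ)⁻¹) ^ (n - 1 - i) := by rw [Finset.prod_const, htc]

theorem vandermonde_inverse_entry_valuation (p : ℕ) [Fact p.Prime] (n : ℕ) (hn : 0 < n)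
    (w : Fin n → ℤ_[p]) (hdist : Function.Injective w)
    (hval : ∀ j, ‖w j‖ = (p : ℝ)⁻¹)
    (hmax : (Finset.univ.sup' ⟨⟨0, hn⟩, Finset.mem_univ _⟩
        (fun j => ((∏ l ∈ Finset.univ.erase j, (w j - w l)).valuation : ℤ))) =
      (n : ℤ) - 1 + (∑ i ∈ Finset.range n, (n - 1) / ((p - 1) * p ^ i) : ℕ))
    (i j : Fin n) :
    ‖((Matrix.vandermonde (fun k => ((w k : ℚ_[p]))))⁻¹ i j)‖ ≤
      (p : ℝ) ^ (-(1 - ((i : ℝ) + 1) - ((n : ℝ) - 1) * p / ((p : ℝ) - 1) ^ 2)) := by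
  have hp := (Fact.out : p.Prime)
  have hp1 : (1 : ℝ) < p := by exact_mod_cast hp.one_lt
  have hp0 : (0 : ℝ) < p := by positivity
  set W : Fin n → ℚ_[p] := fun k => ((w k : ℚ_[p])) with hW
  have hWinj : Function.Injective W := fun a b h => hdist (Subtype.coe_injective h)
  set f : ℕ := (∑ i ∈ Finset.range n, (n - 1) / ((p - 1) * p ^ i) : ℕ) with hf
  -- the denominator in `ℤ_[p]`
  set Dz : ℤ_[p] := ∏ l ∈ Finset.univ.erase j, (w j - w l) with hDz
  have hDz0 : Dz ≠ 0 := by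
    refine Finset.prod_ne_zero_iff.2 fun l hl => sub_ne_zero.2 fun h => ?_
    exact (Finset.mem_erase.1 hl).1 (hdist h.symm)
  have hvalD : (Dz.valuation : ℤ) ≤ (n : ℤ) - 1 + f := by
    rw [← hmax]
    exact Finset.le_sup' (fun j => ((∏ l ∈ Finset.univ.erase j, (w j - w l)).valuation : ℤ)) (Finset.mem_univ j)
  have hDcast : ((Dz : ℚ_[p])) = ∏ l ∈ Finset.univ.erase j, (W j - W l) := by
    rw [hDz]
    exact map_prod (PadicInt.Coe.ringHom (p := p)) _ _ |>.trans (Finset.prod_congr rfl fun l _ => by rw [map_sub]; rfl)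
  have hnormD : (p : ℝ) ^ (-((n : ℤ) - 1 + f)) ≤ ‖∏ l ∈ Finset.univ.erase j, (W j - W l)‖ := by
    rw [← hDcast, ← PadicInt.norm_def, PadicInt.norm_eq_zpow_neg_valuation hDz0]
    exact zpow_le_zpow_right₀ hp1.le (by omega)
  have hDpos : (0 : ℝ) < ‖∏ l ∈ Finset.univ.erase j, (W j - W l)‖ :=
    lt_of_lt_of_le (by positivity) hnormD
  -- rewrite the inverse entry
  rw [vandermonde_inv_eq W hWinj, Matrix.of_apply, norm_div]
  have hnum : ‖(∏ l ∈ Finset.univ.erase j, (Polynomial.X - Polynomial.C (W l))).coeff i‖ ≤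
      ((p : ℝ)⁻¹) ^ (n - 1 - (i : ℕ)) := by
    refine coeff_prod_X_sub_C_norm_le p W (fun l => le_of_eq ?_) j i (by have := i.isLt; omega)
    rw [← PadicInt.norm_def]; exact hval l
  have step1 : ‖(∏ l ∈ Finset.univ.erase j, (Polynomial.X - Polynomial.C (W l))).coeff i‖ /
      ‖∏ l ∈ Finset.univ.erase j, (W j - W l)‖ ≤
      ((p : ℝ)⁻¹) ^ (n - 1 - (i : ℕ)) / (p : ℝ) ^ (-((n : ℤ) - 1 + f)) :=
    div_le_div₀ (by positivity) hnum (by positivity) hnormD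
  refine step1.trans ?_
  -- now pure real-number estimates
  have hi : (i : ℕ) ≤ n - 1 := by have := i.isLt; omega
  have hratio : ((p : ℝ)⁻¹) ^ (n - 1 - (i : ℕ)) / (p : ℝ) ^ (-((n : ℤ) - 1 + f)) =
      (p : ℝ) ^ (((i : ℤ) + f)) := by
    rw [← zpow_natCast ((p : ℝ)⁻¹) (n - 1 - (i : ℕ)), ← zpow_neg_one, ← zpow_mul,
      div_eq_mul_inv, ← zpow_neg, ← zpow_add₀ (ne_of_gt hp0)]
    congr 1
    have : ((n - 1 - (i : ℕ) : ℕ) : ℤ) = (n : ℤ) - 1 - i := by omega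
    rw [this]; ring
  rw [hratio]
  -- compare with the rpow bound
  have hp1' : ((p : ℝ) - 1) ≠ 0 := by linarith
  have hps : (p : ℝ) ≠ 0 := by linarith
  have hn1 : (1 : ℝ) ≤ (n : ℝ) := by exact_mod_cast hn
  have hfE : (f : ℝ) ≤ ((n : ℝ) - 1) * p / ((p : ℝ) - 1) ^ 2 := by
    have hc1 : ((n - 1 : ℕ) : ℝ) = (n : ℝ) - 1 := by
      rw [Nat.cast_sub hn]; norm_num
    have hgeom : ∑ t ∈ Finset.range n, ((p : ℝ)⁻¹) ^ t ≤ (1 - (p : ℝ)⁻¹)⁻¹ :=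
      sum_le_hasSum _ (fun _ _ => by positivity)
        (hasSum_geometric_of_lt_one (by positivity) (by rw [inv_lt_one₀ hp0]; exact hp1))
    calc (f : ℝ) = ∑ t ∈ Finset.range n, (((n - 1) / ((p - 1) * p ^ t) : ℕ) : ℝ) := by
          rw [hf, Nat.cast_sum]
      _ ≤ ∑ t ∈ Finset.range n, ((n : ℝ) - 1) / (((p : ℝ) - 1) * (p : ℝ) ^ t) := by
          refine Finset.sum_le_sum fun t _ => ?_
          calc (((n - 1) / ((p - 1) * p ^ t) : ℕ) : ℝ)
              ≤ ((n - 1 : ℕ) : ℝ) / (((p - 1) * p ^ t : ℕ) : ℝ) := Nat.cast_div_le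
            _ = ((n : ℝ) - 1) / (((p : ℝ) - 1) * (p : ℝ) ^ t) := by
                rw [hc1, Nat.cast_mul, Nat.cast_pow, Nat.cast_sub hp.one_le]; norm_num
      _ = (((n : ℝ) - 1) / ((p : ℝ) - 1)) * ∑ t ∈ Finset.range n, ((p : ℝ)⁻¹) ^ t := by
          rw [Finset.mul_sum]
          refine Finset.sum_congr rfl fun t _ => ?_
          rw [div_mul_eq_div_div, div_eq_mul_inv (((n : ℝ) - 1) / ((p : ℝ) - 1)), ← inv_pow]
      _ ≤ (((n : ℝ) - 1) / ((p : ℝ) - 1)) * (1 - (p : ℝ)⁻¹)⁻¹ :=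
          mul_le_mul_of_nonneg_left hgeom (div_nonneg (by linarith) (by linarith))
      _ = ((n : ℝ) - 1) * p / ((p : ℝ) - 1) ^ 2 := by
          rw [show (1 - (p : ℝ)⁻¹) = ((p : ℝ) - 1) / p by field_simp, inv_div,
            div_mul_div_comm, ← sq]
  have hexp : (((i : ℤ) + f : ℤ) : ℝ) ≤ -(1 - ((i : ℝ) + 1) - ((n : ℝ) - 1) * p / ((p : ℝ) - 1) ^ 2) := by
    push_cast; linarith
  calc (p : ℝ) ^ (((i : ℤ) + f)) = (p : ℝ) ^ ((((i : ℤ) + f : ℤ) : ℝ)) := by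
        rw [Real.rpow_intCast]
    _ ≤ (p : ℝ) ^ (-(1 - ((i : ℝ) + 1) - ((n : ℝ) - 1) * p / ((p : ℝ) - 1) ^ 2)) :=
        Real.rpow_le_rpow_of_exponent_le hp1.le hexp
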